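/- Let K be a standard bilinear Calderón–Zygmund kernel on ℝⁿ with exponent α ∈ (0,1] and constant C_K, let γ = α/(2(2n+α)), and let c₀ > 0. Let I, J, K', Q be cubes in a dyadic grid 𝒟 with ℓ(K') ≤ ℓ(I) = 2ℓ(J), I ∪ J ∪ K' ⊂ Q, and set D := max(d(K',I), d(K',J)). Assume D > ℓ(K')^γ ℓ(J)^{1−γ} and D ≥ c₀ ℓ(K')^γ ℓ(Q)^{1−γ}. Then the integral ∭ K(x,y,z) h_I(y) h_J^0(z) h_{K'}(x) dy dz dx (over x ∈ K', y ∈ I, z ∈ J) converges absolutely and satisfies |∭ K(x,y,z) h_I(y) h_J^0(z) h_{K'}(x) dy dz dx| ≤ C(n,α,c₀) C_K (|I|^{1/2}|J|^{1/2}|K'|^{1/2}/|Q|²) (ℓ(K')/ℓ(Q))^{α/2}, where h_I, h_{K'} are any cancellative Haar functions of I and K' and h_J^0 = |J|^{−1/2}1_J. -/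

import Mathlib

open MeasureTheory Set
open scoped ENNReal NNReal Classical

noncomputable section

namespace Bilinear

/-- Points of `ℝⁿ`, equipped with the `ℓ^∞` (sup) metric. -/
abbrev E (n : ℕ) : Type := Fin n → ℝ

/-- An axis-parallel cube in `ℝⁿ`, described by its lower corner and its side length. -/
structure Cube (n : ℕ) where
  corner : Fin n → ℝ
  side : ℝ
  side_pos : 0 < side

namespace Cube

variable {n : ℕ}

/-- The (half-open) cube as a subset of `ℝⁿ`. -/
def set (Q : Cube n) : Set (E n) :=
  {x | ∀ i, Q.corner i ≤ x i ∧ x i < Q.corner i + Q.side}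

/-- The closed cube as a subset of `ℝⁿ`. -/
def clSet (Q : Cube n) : Set (E n) :=
  {x | ∀ i, Q.corner i ≤ x i ∧ x i ≤ Q.corner i + Q.side}

/-- The volume `|Q| = ℓ(Q)ⁿ` of a cube. -/
def vol (Q : Cube n) : ℝ := Q.side ^ n

/-- The center of a cube. -/
def center (Q : Cube n) : E n := fun i => Q.corner i + Q.side / 2

/-- The concentric dilate `cQ` of a cube (defined for `c ≥ 1`; junk otherwise). -/
def dilate (Q : Cube n) (c : ℝ) : Cube n where
  corner := fun i => Q.corner i + Q.side / 2 - max c 1 * Q.side / 2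
  side := max c 1 * Q.side
  side_pos := mul_pos (lt_of_lt_of_le one_pos (le_max_right c 1)) Q.side_pos

end Cube

/-- The (`ℓ^∞`) distance between two sets of `ℝⁿ`. -/
def setDist {n : ℕ} (s t : Set (E n)) : ℝ := sInf (Set.image2 dist s t)

/-- The (`ℓ^∞`) distance between two cubes. -/
def cubeDist {n : ℕ} (Q R : Cube n) : ℝ := setDist Q.clSet R.clSet

/-- The indicator function `1_Q` of a cube, as a complex-valued function. -/
def indC {n : ℕ} (Q : Cube n) : E n → ℂ := fun x => if x ∈ Q.set then 1 else 0

/-- The average `⟨|f|⟩_Q` of `|f|` over a cube. -/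
def avgAbs {n : ℕ} (Q : Cube n) (f : E n → ℂ) : ℝ := Q.vol⁻¹ * ∫ x in Q.set, ‖f x‖

/-- The average `⟨f⟩_Q` of `f` over a cube. -/
def avg {n : ℕ} (Q : Cube n) (f : E n → ℂ) : ℂ := (Q.vol : ℂ)⁻¹ * ∫ x in Q.set, f x

/-- The `L^p` norm (`p` a real exponent) of `f : ℝⁿ → ℂ`. -/
def lpNorm {n : ℕ} (f : E n → ℂ) (p : ℝ) : ℝ := (eLpNorm f (ENNReal.ofReal p) volume).toReal

/-- `f` is bounded, measurable and compactly supported. -/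
def BddCompactSupp {n : ℕ} (f : E n → ℂ) : Prop :=
  Measurable f ∧ HasCompactSupport f ∧ ∃ M : ℝ, ∀ x, ‖f x‖ ≤ M

/-- The pairing `⟨f, g⟩ = ∫ f g`. -/
def pairing {n : ℕ} (f g : E n → ℂ) : ℂ := ∫ x, f x * g x

/-! ### Random dyadic grids -/

/-- The translation `Σ_{j : 2^{-j} < 2^{-k}} 2^{-j} ω^j` of the grid of scale `2^{-k}`. -/
def gridShift {n : ℕ} (ω : ℤ → Fin n → Bool) (k : ℤ) (i : Fin n) : ℝ :=
  ∑' j : {j : ℤ // k < j}, (2 : ℝ) ^ (-(j.1)) * (if ω j.1 i then 1 else 0)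

/-- The shifted dyadic grid `𝒟_ω = {I + ω : I ∈ 𝒟₀}`. -/
def dyadicGrid {n : ℕ} (ω : ℤ → Fin n → Bool) : Set (Cube n) :=
  {Q | ∃ (k : ℤ) (m : Fin n → ℤ), Q.side = (2 : ℝ) ^ (-k) ∧
    ∀ i, Q.corner i = (m i : ℝ) * (2 : ℝ) ^ (-k) + gridShift ω k i}

/-- A dyadic grid is a translate-type grid `𝒟_ω` of the standard grid. -/
def IsDyadicGrid {n : ℕ} (𝒟 : Set (Cube n)) : Prop := ∃ ω, 𝒟 = dyadicGrid ω

/-- A grid has no quadrants if every strictly increasing chain of cubes exhausts `ℝⁿ`;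
equivalently, every cube of the grid and every point are contained in a common bigger
grid cube. -/
def NoQuadrants {n : ℕ} (𝒟 : Set (Cube n)) : Prop :=
  ∀ Q ∈ 𝒟, ∀ x : E n, ∃ R ∈ 𝒟, Q.set ⊆ R.set ∧ x ∈ R.set

/-- A cube `I` of a grid `𝒟` is good (with parameters `r, γ`) if for every `J ∈ 𝒟` with
`ℓ(J) ≥ 2^r ℓ(I)` one has `d(I, ∂J) > ℓ(I)^γ ℓ(J)^(1-γ)`. -/
def IsGood {n : ℕ} (𝒟 : Set (Cube n)) (r : ℕ) (γ : ℝ) (I : Cube n) : Prop :=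
  ∀ J ∈ 𝒟, (2 : ℝ) ^ r * I.side ≤ J.side →
    I.side ^ γ * J.side ^ (1 - γ) < setDist I.clSet (frontier J.set)

/-! ### Haar functions -/

/-- One-dimensional Haar functions on the interval `[a, a+l)`:
noncancellative (`e = false`) and cancellative (`e = true`). -/
def haar1 (a l : ℝ) (e : Bool) (t : ℝ) : ℝ :=
  if a ≤ t ∧ t < a + l then
    if e then (if t < a + l / 2 then l ^ (-(1 : ℝ) / 2) else -(l ^ (-(1 : ℝ) / 2)))
    else l ^ (-(1 : ℝ) / 2)
  else 0

/-- The Haar function `h_Q^η` of a cube `Q ⊂ ℝⁿ`. It is cancellative iff `η ≠ 0`. -/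
def haar {n : ℕ} (Q : Cube n) (η : Fin n → Bool) : E n → ℝ :=
  fun x => ∏ i, haar1 (Q.corner i) Q.side (η i) (x i)

/-- The pairing `⟨f, h_Q^η⟩`. -/
def haarPairing {n : ℕ} (f : E n → ℂ) (Q : Cube n) (η : Fin n → Bool) : ℂ :=
  ∫ x, f x * (haar Q η x : ℂ)

/-! ### Bilinear Calderón–Zygmund kernels and truncated operators -/


/-- `K` is a (measurable) standard bilinear Calderón–Zygmund kernel on `ℝⁿ` with Hölder
exponent `α` and constant `C`: size bound and Hölder bounds in each of the three
variables, away from the diagonal `Δ = {x = y = z}`. -/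
def CZBounds (n : ℕ) (α : ℝ) (K : E n → E n → E n → ℂ) (C : ℝ) : Prop :=
  Measurable (fun p : E n × E n × E n => K p.1 p.2.1 p.2.2) ∧
  (∀ x y z : E n, ¬(x = y ∧ y = z) →
    ‖K x y z‖ ≤ C / (dist x y + dist x z) ^ (2 * n)) ∧
  (∀ x x' y z : E n, ¬(x = y ∧ y = z) → ¬(x' = y ∧ y = z) →
    dist x x' ≤ max (dist x y) (dist x z) / 2 →
    ‖K x y z - K x' y z‖ ≤ C * dist x x' ^ α / (dist x y + dist x z) ^ (2 * (n : ℝ) + α)) ∧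
  (∀ x y y' z : E n, ¬(x = y ∧ y = z) → ¬(x = y' ∧ y' = z) →
    dist y y' ≤ max (dist x y) (dist x z) / 2 →
    ‖K x y z - K x y' z‖ ≤ C * dist y y' ^ α / (dist x y + dist x z) ^ (2 * (n : ℝ) + α)) ∧
  (∀ x y z z' : E n, ¬(x = y ∧ y = z) → ¬(x = y ∧ y = z') →
    dist z z' ≤ max (dist x y) (dist x z) / 2 →
    ‖K x y z - K x y z'‖ ≤ C * dist z z' ^ α / (dist x y + dist x z) ^ (2 * (n : ℝ) + α))

/-- The truncated bilinear singular integral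
`T_ε(f,g)(x) = ∬_{max(|x-y|,|x-z|) > ε} K(x,y,z) f(y) g(z) dy dz`. -/
def truncT {n : ℕ} (K : E n → E n → E n → ℂ) (ε : ℝ) (f g : E n → ℂ) (x : E n) : ℂ :=
  ∫ y, ∫ z, if ε < max (dist x y) (dist x z) then K x y z * f y * g z else 0

/-- The class `𝒜` of smooth truncation profiles: smooth `φ` with values in `[0,1]`,
vanishing on `[0,1/2]`, equal to `1` on `[1,∞)`, and `‖φ'‖_∞ ≤ 10`. -/
def memA (φ : ℝ → ℝ) : Prop :=
  ContDiff ℝ (⊤ : ℕ∞) φ ∧ (∀ t, φ t ∈ Set.Icc (0 : ℝ) 1) ∧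
    (∀ t ≤ (1 : ℝ) / 2, φ t = 0) ∧ (∀ t, (1 : ℝ) ≤ t → φ t = 1) ∧ ∀ t, |deriv φ t| ≤ 10

/-- The smoothly truncated kernel `K_ε^φ(x,y,z) = K(x,y,z) φ((|x-y|+|x-z|)/ε)`. -/
def smoothK {n : ℕ} (K : E n → E n → E n → ℂ) (φ : ℝ → ℝ) (ε : ℝ) :
    E n → E n → E n → ℂ :=
  fun x y z => K x y z * ((φ ((dist x y + dist x z) / ε) : ℝ) : ℂ)

/-- The smoothly truncated operator `T_ε^φ(f,g)(x) = ∬ K_ε^φ(x,y,z) f(y) g(z) dy dz`. -/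
def smoothT {n : ℕ} (K : E n → E n → E n → ℂ) (φ : ℝ → ℝ) (ε : ℝ) (f g : E n → ℂ)
    (x : E n) : ℂ :=
  ∫ y, ∫ z, smoothK K φ ε x y z * f y * g z

/-- The first adjoint kernel, `K^{1*}(x,y,z) = K(y,x,z)`. -/
def adj1 {n : ℕ} (K : E n → E n → E n → ℂ) : E n → E n → E n → ℂ := fun x y z => K y x z

/-- The second adjoint kernel, `K^{2*}(x,y,z) = K(z,y,x)`. -/
def adj2 {n : ℕ} (K : E n → E n → E n → ℂ) : E n → E n → E n → ℂ := fun x y z => K z y x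

/-- `C` is a weak boundedness constant of the bilinear operator `T`:
`|⟨T(1_I,1_I), 1_I⟩| ≤ C |I|` for all cubes `I ⊂ ℝⁿ`. -/
def WBPBound {n : ℕ} (T : (E n → ℂ) → (E n → ℂ) → E n → ℂ) (C : ℝ) : Prop :=
  ∀ Q : Cube n, ‖∫ x in Q.set, T (indC Q) (indC Q) x‖ ≤ C * Q.vol

/-! ### The `BMO` pairings `⟨T_ε(1,1), φ₀⟩` and testing conditions -/

/-- The pairing `⟨T_ε(1,1), φ₀⟩`, defined (for `φ₀` supported in the cube `R`, with mean
zero, and `c ≥ 3` a dilation factor) as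
`⟨T_ε(1_{cR},1_{cR}), φ₀⟩ + ∭ (K(x,y,z) - K(c_R,y,z)) 1_{(cR×cR)ᶜ}(y,z) φ₀(x) dy dz dx`. -/
def bmoPairing {n : ℕ} (K : E n → E n → E n → ℂ) (ε : ℝ) (φ₀ : E n → ℂ) (R : Cube n)
    (c : ℝ) : ℂ :=
  (∫ x, truncT K ε (indC (R.dilate c)) (indC (R.dilate c)) x * φ₀ x) +
    ∫ x, φ₀ x * ∫ y, ∫ z,
      if y ∈ (R.dilate c).set ∧ z ∈ (R.dilate c).set then 0
      else K x y z - K R.center y z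

/-- The pairing `⟨T_ε^{1*}(1,1), φ₀⟩ = ⟨T_ε(φ₀, 1_{cR}), 1_{cR}⟩ + (correction with K^{1*})`. -/
def bmoPairing1 {n : ℕ} (K : E n → E n → E n → ℂ) (ε : ℝ) (φ₀ : E n → ℂ) (R : Cube n)
    (c : ℝ) : ℂ :=
  (∫ x, truncT K ε φ₀ (indC (R.dilate c)) x * indC (R.dilate c) x) +
    ∫ x, φ₀ x * ∫ y, ∫ z,
      if y ∈ (R.dilate c).set ∧ z ∈ (R.dilate c).set then 0
      else adj1 K x y z - adj1 K R.center y z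

/-- The pairing `⟨T_ε^{2*}(1,1), φ₀⟩ = ⟨T_ε(1_{cR}, φ₀), 1_{cR}⟩ + (correction with K^{2*})`. -/
def bmoPairing2 {n : ℕ} (K : E n → E n → E n → ℂ) (ε : ℝ) (φ₀ : E n → ℂ) (R : Cube n)
    (c : ℝ) : ℂ :=
  (∫ x, truncT K ε (indC (R.dilate c)) φ₀ x * indC (R.dilate c) x) +
    ∫ x, φ₀ x * ∫ y, ∫ z,
      if y ∈ (R.dilate c).set ∧ z ∈ (R.dilate c).set then 0
      else adj2 K x y z - adj2 K R.center y z

/-- `B` is an admissible `BMO` bound for `T_ε(1,1)`: `|⟨T_ε(1,1), φ₀⟩| ≤ B |R|`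
over all admissible testing data. -/
def BMOBound {n : ℕ} (K : E n → E n → E n → ℂ) (ε : ℝ) (B : ℝ) : Prop :=
  ∀ (R : Cube n) (φ₀ : E n → ℂ), Measurable φ₀ → Function.support φ₀ ⊆ R.clSet →
    (∀ x, ‖φ₀ x‖ ≤ 1) → (∫ x, φ₀ x) = 0 →
    ∀ c : ℝ, 3 ≤ c → ε < 2⁻¹ * (c - 1) * R.side →
      ‖bmoPairing K ε φ₀ R c‖ ≤ B * R.vol

/-- `B` is an admissible `BMO` bound for `T_ε^{1*}(1,1)`. -/
def BMOBound1 {n : ℕ} (K : E n → E n → E n → ℂ) (ε : ℝ) (B : ℝ) : Prop :=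
  ∀ (R : Cube n) (φ₀ : E n → ℂ), Measurable φ₀ → Function.support φ₀ ⊆ R.clSet →
    (∀ x, ‖φ₀ x‖ ≤ 1) → (∫ x, φ₀ x) = 0 →
    ∀ c : ℝ, 3 ≤ c → ε < 2⁻¹ * (c - 1) * R.side →
      ‖bmoPairing1 K ε φ₀ R c‖ ≤ B * R.vol

/-- `B` is an admissible `BMO` bound for `T_ε^{2*}(1,1)`. -/
def BMOBound2 {n : ℕ} (K : E n → E n → E n → ℂ) (ε : ℝ) (B : ℝ) : Prop :=
  ∀ (R : Cube n) (φ₀ : E n → ℂ), Measurable φ₀ → Function.support φ₀ ⊆ R.clSet →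
    (∀ x, ‖φ₀ x‖ ≤ 1) → (∫ x, φ₀ x) = 0 →
    ∀ c : ℝ, 3 ≤ c → ε < 2⁻¹ * (c - 1) * R.side →
      ‖bmoPairing2 K ε φ₀ R c‖ ≤ B * R.vol

/-! ### Sparse collections -/

/-- A collection `𝒮` of cubes is `η`-sparse: every `Q ∈ 𝒮` carries a major measurable
subset `E_Q ⊆ Q` with `|E_Q| > η |Q|`, the sets `E_Q` being pairwise disjoint. -/
def IsSparse {n : ℕ} (η : ℝ) (𝒮 : Set (Cube n)) : Prop :=
  ∃ Esel : Cube n → Set (E n),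
    (∀ Q ∈ 𝒮, MeasurableSet (Esel Q) ∧ Esel Q ⊆ Q.set ∧
      ENNReal.ofReal (η * Q.vol) < MeasureTheory.volume (Esel Q)) ∧
    𝒮.Pairwise fun Q R => Disjoint (Esel Q) (Esel R)

/-- The sparse form `Λ_𝒮(f₁,f₂,f₃) = Σ_{Q ∈ 𝒮} |Q| ⟨|f₁|⟩_Q ⟨|f₂|⟩_Q ⟨|f₃|⟩_Q`. -/
def sparseForm {n : ℕ} (𝒮 : Set (Cube n)) (f₁ f₂ f₃ : E n → ℂ) : ℝ :=
  ∑' Q : 𝒮, (Q : Cube n).vol * avgAbs Q f₁ * avgAbs Q f₂ * avgAbs Q f₃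

/-! ### Bilinear dyadic shifts and paraproducts, as trilinear forms -/

/-- A trilinear form on functions on `ℝⁿ`. -/
abbrev TriForm (n : ℕ) : Type := (E n → ℂ) → (E n → ℂ) → (E n → ℂ) → ℂ

/-- The index set of a bilinear dyadic shift of complexity `(i,j,k)` in the grid `𝒟`:
tuples of cubes `I, J, K ⊆ Q` of `𝒟` with `ℓ(I) = 2^{-i} ℓ(Q)`, `ℓ(J) = 2^{-j} ℓ(Q)`,
`ℓ(K) = 2^{-k} ℓ(Q)`, together with Haar signatures, `h_K` being cancellative and at most
one of `h_I, h_J` being noncancellative. -/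
structure ShiftIndex (n : ℕ) (𝒟 : Set (Cube n)) (i j k : ℕ) where
  Q : Cube n
  I : Cube n
  J : Cube n
  K : Cube n
  ηf : Fin n → Bool
  ηg : Fin n → Bool
  ηh : Fin n → Bool
  memQ : Q ∈ 𝒟
  memI : I ∈ 𝒟
  memJ : J ∈ 𝒟
  memK : K ∈ 𝒟
  subI : I.set ⊆ Q.set
  subJ : J.set ⊆ Q.set
  subK : K.set ⊆ Q.set
  sideI : I.side = Q.side / 2 ^ i
  sideJ : J.side = Q.side / 2 ^ j
  sideK : K.side = Q.side / 2 ^ k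
  cancel_h : ηh ≠ fun _ => false
  cancel_fg : ¬(ηf = (fun _ => false) ∧ ηg = (fun _ => false))

/-- `Λ` is (the trilinear form of) a cancellative bilinear dyadic shift of complexity
`(i,j,k)` in the grid `𝒟`: `Λ(f,g,h) = Σ α_{I,J,K,Q} ⟨f, h̃_I⟩ ⟨g, h̃_J⟩ ⟨h, h_K⟩`
with `|α_{I,J,K,Q}| ≤ |I|^{1/2} |J|^{1/2} |K|^{1/2} / |Q|²`. -/
def IsShiftForm {n : ℕ} (𝒟 : Set (Cube n)) (i j k : ℕ) (Λ : TriForm n) : Prop :=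
  ∃ α : ShiftIndex n 𝒟 i j k → ℂ,
    (∀ t, ‖α t‖ ≤ Real.sqrt (t.I.vol * t.J.vol * t.K.vol) / t.Q.vol ^ 2) ∧
    ∀ f g h, Λ f g h =
      ∑' t : ShiftIndex n 𝒟 i j k,
        α t * haarPairing f t.I t.ηf * haarPairing g t.J t.ηg * haarPairing h t.K t.ηh

/-- `Λ` is a cancellative bilinear shift of complexity `(i,i,k)` or `(i,i+1,k)` in `𝒟`,
or an adjoint (`⟨S^{1*}(f,g),h⟩ = ⟨S(h,g),f⟩`, `⟨S^{2*}(f,g),h⟩ = ⟨S(f,h),g⟩`) of such. -/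
def IsExtShiftForm {n : ℕ} (𝒟 : Set (Cube n)) (i k : ℕ) (Λ : TriForm n) : Prop :=
  ∃ Λ₀ : TriForm n, (IsShiftForm 𝒟 i i k Λ₀ ∨ IsShiftForm 𝒟 i (i + 1) k Λ₀) ∧
    ((∀ f g h, Λ f g h = Λ₀ f g h) ∨ (∀ f g h, Λ f g h = Λ₀ h g f) ∨
      (∀ f g h, Λ f g h = Λ₀ f h g))

/-- The index set of a bilinear paraproduct in the grid `𝒟`: cubes `K ∈ 𝒟` with a
cancellative Haar signature. -/
structure ParaIndex (n : ℕ) (𝒟 : Set (Cube n)) where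
  K : Cube n
  η : Fin n → Bool
  mem : K ∈ 𝒟
  cancel : η ≠ fun _ => false

/-- `Λ` is (the trilinear form of) a bilinear paraproduct
`Π_β(f,g) = Σ_K β_K ⟨f⟩_K ⟨g⟩_K h_K` in the grid `𝒟`, with coefficients satisfying the
Carleson normalization `Σ_{K ⊆ K₀} |β_K|² ≤ |K₀|` for all `K₀ ∈ 𝒟`. -/
def IsParaForm {n : ℕ} (𝒟 : Set (Cube n)) (Λ : TriForm n) : Prop :=
  ∃ β : ParaIndex n 𝒟 → ℂ,
    (∀ K₀ ∈ 𝒟, (∑' t : {t : ParaIndex n 𝒟 // t.K.set ⊆ K₀.set},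
        ((‖β t.1‖₊ : ℝ≥0∞) ^ 2)) ≤ ENNReal.ofReal K₀.vol) ∧
    ∀ f g h, Λ f g h =
      ∑' t : ParaIndex n 𝒟, β t * avg t.K f * avg t.K g * haarPairing h t.K t.η


/-! ### Auxiliary lemmas for Statement 7 -/

section Aux

variable {n : ℕ}

lemma cube_set_eq (Q : Cube n) :
    Q.set = Set.pi Set.univ (fun i => Set.Ico (Q.corner i) (Q.corner i + Q.side)) := by
  ext x; simp [Cube.set, Set.mem_pi, Set.mem_Ico]

lemma cube_measurableSet (Q : Cube n) : MeasurableSet Q.set := by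
  rw [cube_set_eq]; exact MeasurableSet.univ_pi fun i => measurableSet_Ico

lemma vol_pos (Q : Cube n) : 0 < Q.vol := pow_pos Q.side_pos n

lemma cube_volume (Q : Cube n) : volume Q.set = ENNReal.ofReal Q.vol := by
  rw [cube_set_eq, volume_pi_pi]
  simp only [Real.volume_Ico, add_sub_cancel_left]
  rw [Finset.prod_const, Finset.card_univ, Fintype.card_fin, Cube.vol,
    ENNReal.ofReal_pow Q.side_pos.le]

lemma haar1_abs_le {a l : ℝ} (hl : 0 < l) (e : Bool) (t : ℝ) :
    |haar1 a l e t| ≤ l ^ (-(1 : ℝ) / 2) := by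
  have h0 : (0 : ℝ) ≤ l ^ (-(1 : ℝ) / 2) := Real.rpow_nonneg hl.le _
  unfold haar1
  split_ifs <;> simp [abs_of_nonneg h0, abs_neg, h0]

lemma haar1_eq_zero {a l t : ℝ} (h : ¬(a ≤ t ∧ t < a + l)) (e : Bool) :
    haar1 a l e t = 0 := if_neg h

lemma haar1_measurable (a l : ℝ) (e : Bool) : Measurable (haar1 a l e) := by
  unfold haar1
  have h1 : MeasurableSet {t : ℝ | a ≤ t ∧ t < a + l} := by
    show MeasurableSet (Set.Ico a (a + l)); exact measurableSet_Ico
  refine Measurable.ite h1 ?_ measurable_const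
  cases e
  · exact measurable_const
  · simp only [if_true]
    exact Measurable.ite measurableSet_Iio measurable_const measurable_const

lemma haar_measurable (Q : Cube n) (η : Fin n → Bool) : Measurable (haar Q η) := by
  unfold haar
  exact Finset.measurable_prod _ fun i _ =>
    (haar1_measurable _ _ _).comp (measurable_pi_apply i)

/-- The trivial sup bound for the Haar function of a cube. -/
def haarBd (Q : Cube n) : ℝ := (Q.side ^ (-(1 : ℝ) / 2)) ^ n

lemma haarBd_nonneg (Q : Cube n) : 0 ≤ haarBd Q :=
  pow_nonneg (Real.rpow_nonneg Q.side_pos.le _) n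

lemma abs_haar_le (Q : Cube n) (η : Fin n → Bool) (x : E n) :
    |haar Q η x| ≤ haarBd Q := by
  unfold haar haarBd
  rw [Finset.abs_prod]
  calc ∏ i, |haar1 (Q.corner i) Q.side (η i) (x i)|
      ≤ ∏ _i : Fin n, Q.side ^ (-(1 : ℝ) / 2) :=
        Finset.prod_le_prod (fun i _ => abs_nonneg _)
          (fun i _ => haar1_abs_le Q.side_pos _ _)
    _ = _ := by rw [Finset.prod_const, Finset.card_univ, Fintype.card_fin]

lemma haar_eq_zero (Q : Cube n) (η : Fin n → Bool) {x : E n} (hx : x ∉ Q.set) :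
    haar Q η x = 0 := by
  simp only [Cube.set, Set.mem_setOf_eq, not_forall] at hx
  obtain ⟨i, hi⟩ := hx
  exact Finset.prod_eq_zero (Finset.mem_univ i) (haar1_eq_zero hi _)

lemma integral_haar1_true {a l : ℝ} (hl : 0 < l) : ∫ t, haar1 a l true t = 0 := by
  set c : ℝ := l ^ (-(1 : ℝ) / 2) with hc
  have key : (fun t => haar1 a l true t) =
      fun t => (Set.Ico a (a + l / 2)).indicator (fun _ => c) t
        + (Set.Ico (a + l / 2) (a + l)).indicator (fun _ => -c) t := by
    ext t
    unfold haar1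
    rw [Set.indicator_apply, Set.indicator_apply]
    simp only [Set.mem_Ico, if_true]
    rcases le_or_gt a t with h1 | h1
    · rcases lt_or_ge t (a + l / 2) with h2 | h2
      · rw [if_pos ⟨h1, by linarith⟩, if_pos h2, if_pos ⟨h1, h2⟩,
          if_neg (by rintro ⟨h3, -⟩; linarith)]
        ring
      · rcases lt_or_ge t (a + l) with h3 | h3
        · rw [if_pos ⟨h1, h3⟩, if_neg (not_lt.mpr h2),
            if_neg (by rintro ⟨-, h4⟩; linarith), if_pos ⟨h2, h3⟩]
          ring
        · rw [if_neg (by rintro ⟨-, h4⟩; linarith), if_neg (by rintro ⟨-, h4⟩; linarith),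
            if_neg (by rintro ⟨-, h4⟩; linarith)]
          ring
    · rw [if_neg (by rintro ⟨h2, -⟩; linarith), if_neg (by rintro ⟨h2, -⟩; linarith),
        if_neg (by rintro ⟨h2, -⟩; linarith)]
      ring
  have hi1 : Integrable ((Set.Ico a (a + l / 2)).indicator (fun _ => c)) := by
    rw [integrable_indicator_iff measurableSet_Ico]
    exact integrableOn_const measure_Ico_lt_top.ne
  have hi2 : Integrable ((Set.Ico (a + l / 2) (a + l)).indicator (fun _ => -c)) := by
    rw [integrable_indicator_iff measurableSet_Ico]
    exact integrableOn_const measure_Ico_lt_top.ne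
  rw [key, integral_add hi1 hi2, integral_indicator_const _ measurableSet_Ico,
    integral_indicator_const _ measurableSet_Ico]
  simp only [Real.volume_real_Ico, smul_eq_mul]
  rw [show a + l / 2 - a = l / 2 by ring, show a + l - (a + l / 2) = l / 2 by ring]
  ring

lemma integral_haar_eq_zero (Q : Cube n) (η : Fin n → Bool) (hη : η ≠ fun _ => false) :
    ∫ x, haar Q η x = 0 := by
  obtain ⟨i, hi⟩ : ∃ i, η i = true := by
    by_contra h
    push_neg at h
    exact hη (funext fun i => by simpa using h i)
  unfold haar
  rw [MeasureTheory.volume_pi, MeasureTheory.integral_fintype_prod_eq_prod (ι := Fin n)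
    (fun i t => haar1 (Q.corner i) Q.side (η i) t)]
  exact Finset.prod_eq_zero (Finset.mem_univ i)
    (by rw [hi]; exact integral_haar1_true Q.side_pos)

lemma set_subset_clSet (Q : Cube n) : Q.set ⊆ Q.clSet :=
  fun x hx i => ⟨(hx i).1, (hx i).2.le⟩

lemma center_mem_clSet (Q : Cube n) : Q.center ∈ Q.clSet := by
  intro i
  unfold Cube.center
  constructor <;> [linarith [Q.side_pos]; linarith [Q.side_pos]]

lemma cubeDist_le_dist {Q R : Cube n} {x y : E n} (hx : x ∈ Q.clSet) (hy : y ∈ R.clSet) :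
    cubeDist Q R ≤ dist x y := by
  apply csInf_le
  · exact ⟨0, by rintro d ⟨a, ha, b, hb, rfl⟩; exact dist_nonneg⟩
  · exact Set.mem_image2_of_mem hx hy

lemma haarBd_mul_vol (R : Cube n) : haarBd R * R.vol = Real.sqrt R.vol := by
  unfold haarBd Cube.vol
  have hs := R.side_pos
  rw [← mul_pow]
  have h1 : R.side ^ (-(1:ℝ)/2) * R.side = R.side ^ ((1:ℝ)/2) := by
    nth_rewrite 2 [← Real.rpow_one R.side]
    rw [← Real.rpow_add hs]
    norm_num
  rw [h1, Real.sqrt_eq_rpow, ← Real.rpow_natCast (R.side ^ ((1:ℝ)/2)) n,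
    ← Real.rpow_mul hs.le, ← Real.rpow_natCast R.side n, ← Real.rpow_mul hs.le]
  ring_nf

lemma norm_mul4_le {k : ℂ} {r1 r2 r3 : ℝ} {K1 B1 B2 B3 : ℝ}
    (hk : ‖k‖ ≤ K1) (h1 : |r1| ≤ B1) (h2 : |r2| ≤ B2) (h3 : |r3| ≤ B3)
    (hK1 : 0 ≤ K1) (hB1 : 0 ≤ B1) (hB2 : 0 ≤ B2) :
    ‖k * (r1 : ℂ) * (r2 : ℂ) * (r3 : ℂ)‖ ≤ K1 * B1 * B2 * B3 := by
  rw [norm_mul, norm_mul, norm_mul, Complex.norm_real, Complex.norm_real,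
    Complex.norm_real, Real.norm_eq_abs, Real.norm_eq_abs, Real.norm_eq_abs]
  exact mul_le_mul (mul_le_mul (mul_le_mul hk h1 (abs_nonneg _) hK1) h2 (abs_nonneg _)
    (mul_nonneg hK1 hB1)) h3 (abs_nonneg _) (mul_nonneg (mul_nonneg hK1 hB1) hB2)

end Aux

/-- kernel bound for the separated Haar coefficients: if
`ℓ(K') ≤ ℓ(I) = 2 ℓ(J)`, `I ∪ J ∪ K' ⊆ Q`, and
`D := max(d(K',I), d(K',J))` satisfies `D > ℓ(K')^γ ℓ(J)^{1-γ}` (with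
`γ = α/(2(2n+α))`) and `D ≥ c₀ ℓ(K')^γ ℓ(Q)^{1-γ}`, then
`|⟨T(h_I, h_J⁰), h_{K'}⟩| ≤ C(n,α,c₀) C_K (|I|^{1/2}|J|^{1/2}|K'|^{1/2}/|Q|²) (ℓ(K')/ℓ(Q))^{α/2}`,
the triple integral converging absolutely. -/
theorem separated_haar_coefficient_bound (n : ℕ) (hn : 0 < n)
    (α : ℝ) (hα : α ∈ Set.Ioc (0 : ℝ) 1) (c₀ : ℝ) (hc₀ : 0 < c₀) :
    ∃ C : ℝ, 0 < C ∧
      ∀ (K : E n → E n → E n → ℂ) (CK : ℝ), CZBounds n α K CK →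
      ∀ (ω : ℤ → Fin n → Bool) (I J K' Q : Cube n),
        I ∈ dyadicGrid ω → J ∈ dyadicGrid ω → K' ∈ dyadicGrid ω → Q ∈ dyadicGrid ω →
        K'.side ≤ I.side → I.side = 2 * J.side →
        I.set ∪ J.set ∪ K'.set ⊆ Q.set →
        K'.side ^ (α / (2 * (2 * (n : ℝ) + α))) *
            J.side ^ (1 - α / (2 * (2 * (n : ℝ) + α))) <
          max (cubeDist K' I) (cubeDist K' J) →
        c₀ * (K'.side ^ (α / (2 * (2 * (n : ℝ) + α))) *
            Q.side ^ (1 - α / (2 * (2 * (n : ℝ) + α)))) ≤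
          max (cubeDist K' I) (cubeDist K' J) →
      ∀ ηI ηK : Fin n → Bool, ηI ≠ (fun _ => false) → ηK ≠ (fun _ => false) →
        Integrable (fun t : E n × E n × E n =>
          K t.1 t.2.1 t.2.2 * ((haar I ηI t.2.1 : ℝ) : ℂ) *
            ((haar J (fun _ => false) t.2.2 : ℝ) : ℂ) * ((haar K' ηK t.1 : ℝ) : ℂ))
          volume ∧
        ‖∫ t : E n × E n × E n,
            K t.1 t.2.1 t.2.2 * ((haar I ηI t.2.1 : ℝ) : ℂ) *
              ((haar J (fun _ => false) t.2.2 : ℝ) : ℂ) * ((haar K' ηK t.1 : ℝ) : ℂ)‖ ≤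
          C * CK * (Real.sqrt (I.vol * J.vol * K'.vol) / Q.vol ^ 2) *
            (K'.side / Q.side) ^ (α / 2) := by
  obtain ⟨hα0, hα1⟩ := hα
  set β : ℝ := 2 * (n : ℝ) + α with hβ
  have hn' : (0:ℝ) ≤ (n:ℝ) := Nat.cast_nonneg n
  have hβpos : 0 < β := by rw [hβ]; linarith
  have hc₀β : (0:ℝ) < c₀ ^ β := Real.rpow_pos_of_pos hc₀ β
  refine ⟨2 * (c₀ ^ β)⁻¹, by positivity, ?_⟩
  intro K CK hK ω I J K' Q hI𝒟 hJ𝒟 hK𝒟 hQ𝒟 hKI hIJ hsub hD1 hD2 ηI ηK hηI hηK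
  have hsI := I.side_pos
  have hsJ := J.side_pos
  have hsK := K'.side_pos
  have hsQ := Q.side_pos
  set γ : ℝ := α / (2 * β) with hγ
  set D : ℝ := max (cubeDist K' I) (cubeDist K' J) with hD
  have hγ0 : 0 ≤ γ := by rw [hγ]; positivity
  have hγβ : γ * β = α / 2 := by rw [hγ]; field_simp
  -- lower bounds on the separation `D`
  have hKJ : K'.side / 2 ≤ J.side := by linarith
  have hstep : K'.side / 2 ≤ K'.side ^ γ * J.side ^ (1 - γ) := by
    have hγhalf : γ ≤ 1 / 2 := by
      rw [hγ, div_le_div_iff₀ (by linarith) (by norm_num)]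
      rw [hβ]; linarith
    have h1 : (K'.side / 2) ^ (1 - γ) ≤ J.side ^ (1 - γ) :=
      Real.rpow_le_rpow (by positivity) hKJ (by linarith)
    have h2 : K'.side ^ γ * (K'.side / 2) ^ (1 - γ) ≤ K'.side ^ γ * J.side ^ (1 - γ) :=
      mul_le_mul_of_nonneg_left h1 (Real.rpow_nonneg hsK.le γ)
    refine le_trans ?_ h2
    have h4 : K'.side ^ γ * (K'.side / 2) ^ (1 - γ) = K'.side / 2 ^ (1 - γ) := by
      rw [Real.div_rpow hsK.le (by norm_num), ← mul_div_assoc, ← Real.rpow_add hsK]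
      norm_num
    rw [h4]
    have h3 : (2:ℝ) ^ (1 - γ) ≤ 2 := by
      nth_rewrite 2 [← Real.rpow_one 2]
      exact Real.rpow_le_rpow_of_exponent_le one_le_two (by linarith)
    exact div_le_div₀ hsK.le le_rfl (Real.rpow_pos_of_pos two_pos _) h3
  have hDK : K'.side / 2 < D := lt_of_le_of_lt hstep hD1
  have hD0 : 0 < D := lt_trans (half_pos hsK) hDK
  -- separation of the cubes
  have hsep : ∀ {x y z : E n}, x ∈ K'.clSet → y ∈ I.clSet → z ∈ J.clSet →
      D ≤ max (dist x y) (dist x z) := fun hx hy hz =>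
    max_le_max (cubeDist_le_dist hx hy) (cubeDist_le_dist hx hz)
  have hsum : ∀ {x y z : E n}, x ∈ K'.clSet → y ∈ I.clSet → z ∈ J.clSet →
      D ≤ dist x y + dist x z := by
    intro x y z hx hy hz
    refine le_trans (hsep hx hy hz) (max_le ?_ ?_)
    · exact le_add_of_nonneg_right dist_nonneg
    · exact le_add_of_nonneg_left dist_nonneg
  have hoff : ∀ {x y z : E n}, x ∈ K'.clSet → y ∈ I.clSet → z ∈ J.clSet →
      ¬(x = y ∧ y = z) := by
    rintro x y z hx hy hz ⟨rfl, rfl⟩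
    have h := hsum hx hy hz
    rw [dist_self] at h
    linarith
  -- the CZ constant is nonnegative
  have hCK : 0 ≤ CK := by
    have hxy : (fun _ => (0:ℝ) : E n) ≠ (fun _ => (1:ℝ)) := by
      intro h
      have := congrFun h ⟨0, hn⟩
      norm_num at this
    have h := hK.2.1 (fun _ => 0) (fun _ => 1) (fun _ => 0)
      (by rintro ⟨h1, -⟩; exact hxy h1)
    have hd : 0 < dist (fun _ => (0:ℝ) : E n) (fun _ => (1:ℝ))
        + dist (fun _ => (0:ℝ) : E n) (fun _ => (0:ℝ) : E n) := by
      have h2 := dist_pos.mpr hxy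
      have h3 : dist (fun _ => (0:ℝ) : E n) (fun _ => (0:ℝ) : E n) = 0 := dist_self _
      linarith
    have hp : 0 < (dist (fun _ => (0:ℝ) : E n) (fun _ => (1:ℝ))
        + dist (fun _ => (0:ℝ) : E n) (fun _ => (0:ℝ) : E n)) ^ (2*n) := pow_pos hd _
    have h2 := le_trans (norm_nonneg _) h
    by_contra hneg
    push_neg at hneg
    have := div_neg_of_neg_of_pos hneg hp
    linarith
  -- the integrand
  set F : E n × E n × E n → ℂ := fun t =>
    K t.1 t.2.1 t.2.2 * ((haar I ηI t.2.1 : ℝ) : ℂ) *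
      ((haar J (fun _ => false) t.2.2 : ℝ) : ℂ) * ((haar K' ηK t.1 : ℝ) : ℂ) with hFdef
  set Bx : Set (E n × E n × E n) := K'.set ×ˢ (I.set ×ˢ J.set) with hBx
  have hBxm : MeasurableSet Bx :=
    (cube_measurableSet K').prod ((cube_measurableSet I).prod (cube_measurableSet J))
  have hBxvol : volume Bx = ENNReal.ofReal (K'.vol * (I.vol * J.vol)) := by
    rw [hBx, Measure.volume_eq_prod, Measure.prod_prod, Measure.volume_eq_prod, Measure.prod_prod,
      cube_volume, cube_volume, cube_volume,
      ← ENNReal.ofReal_mul (vol_pos I).le, ← ENNReal.ofReal_mul (vol_pos K').le]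
  -- size bound for the kernel on the support
  have hM1 : ∀ x y z : E n, x ∈ K'.clSet → y ∈ I.clSet → z ∈ J.clSet →
      ‖K x y z‖ ≤ CK / D ^ (2 * n) := by
    intro x y z hx hy hz
    refine (hK.2.1 x y z (hoff hx hy hz)).trans ?_
    exact div_le_div₀ hCK le_rfl (pow_pos hD0 _)
      (pow_le_pow_left₀ hD0.le (hsum hx hy hz) _)
  have hFzero : ∀ t : E n × E n × E n, t ∉ Bx → F t = 0 := by
    rintro ⟨x, y, z⟩ ht
    simp only [hBx, Set.mem_prod, not_and_or] at ht
    simp only [hFdef]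
    rcases ht with h | h | h
    · rw [haar_eq_zero K' ηK h]; simp
    · rw [haar_eq_zero I ηI h]; simp
    · rw [haar_eq_zero J _ h]; simp
  have hCKD : 0 ≤ CK / D ^ (2*n) := div_nonneg hCK (pow_nonneg hD0.le _)
  set M₁ : ℝ := CK / D ^ (2*n) * haarBd I * haarBd J * haarBd K' with hM₁def
  have hFbd : ∀ t, ‖F t‖ ≤ Bx.indicator (fun _ => M₁) t := by
    intro t
    by_cases ht : t ∈ Bx
    · rw [Set.indicator_of_mem ht, hM₁def]
      obtain ⟨x, y, z⟩ := t
      obtain ⟨hx, hy, hz⟩ := ht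
      simp only [hFdef]
      exact norm_mul4_le
        (hM1 x y z (set_subset_clSet K' hx) (set_subset_clSet I hy) (set_subset_clSet J hz))
        (abs_haar_le I ηI y) (abs_haar_le J _ z) (abs_haar_le K' ηK x)
        hCKD (haarBd_nonneg I) (haarBd_nonneg J)
    · rw [Set.indicator_of_notMem ht, hFzero t ht, norm_zero]
  have hintBd : Integrable (Bx.indicator fun _ => M₁) := by
    rw [integrable_indicator_iff hBxm]
    exact integrableOn_const (by rw [hBxvol]; exact ENNReal.ofReal_ne_top)
  have hFmeas : Measurable F := by
    simp only [hFdef]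
    refine ((hK.1.mul ?_).mul ?_).mul ?_
    · exact Complex.measurable_ofReal.comp ((haar_measurable I ηI).comp measurable_snd.fst)
    · exact Complex.measurable_ofReal.comp ((haar_measurable J _).comp measurable_snd.snd)
    · exact Complex.measurable_ofReal.comp ((haar_measurable K' ηK).comp measurable_fst)
  have hFint : Integrable F :=
    hintBd.mono' hFmeas.aestronglyMeasurable (Filter.Eventually.of_forall hFbd)
  refine ⟨hFint, ?_⟩
  -- the comparison integrand with frozen first variable
  set c : E n := K'.center with hcdef
  have hccl : c ∈ K'.clSet := center_mem_clSet K'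
  set F₀ : E n × E n × E n → ℂ := fun t =>
    K c t.2.1 t.2.2 * ((haar I ηI t.2.1 : ℝ) : ℂ) *
      ((haar J (fun _ => false) t.2.2 : ℝ) : ℂ) * ((haar K' ηK t.1 : ℝ) : ℂ) with hF₀def
  have hF₀meas : Measurable F₀ := by
    simp only [hF₀def]
    refine (((hK.1.comp
      (measurable_const.prodMk (measurable_snd.fst.prodMk measurable_snd.snd))).mul
      ?_).mul ?_).mul ?_
    · exact Complex.measurable_ofReal.comp ((haar_measurable I ηI).comp measurable_snd.fst)
    · exact Complex.measurable_ofReal.comp ((haar_measurable J _).comp measurable_snd.snd)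
    · exact Complex.measurable_ofReal.comp ((haar_measurable K' ηK).comp measurable_fst)
  have hF₀zero : ∀ t : E n × E n × E n, t ∉ Bx → F₀ t = 0 := by
    rintro ⟨x, y, z⟩ ht
    simp only [hBx, Set.mem_prod, not_and_or] at ht
    simp only [hF₀def]
    rcases ht with h | h | h
    · rw [haar_eq_zero K' ηK h]; simp
    · rw [haar_eq_zero I ηI h]; simp
    · rw [haar_eq_zero J _ h]; simp
  have hF₀bd : ∀ t, ‖F₀ t‖ ≤ Bx.indicator (fun _ => M₁) t := by
    intro t
    by_cases ht : t ∈ Bx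
    · rw [Set.indicator_of_mem ht, hM₁def]
      obtain ⟨x, y, z⟩ := t
      obtain ⟨hx, hy, hz⟩ := ht
      simp only [hF₀def]
      exact norm_mul4_le
        (hM1 c y z hccl (set_subset_clSet I hy) (set_subset_clSet J hz))
        (abs_haar_le I ηI y) (abs_haar_le J _ z) (abs_haar_le K' ηK x)
        hCKD (haarBd_nonneg I) (haarBd_nonneg J)
    · rw [Set.indicator_of_notMem ht, hF₀zero t ht, norm_zero]
  have hF₀int : Integrable F₀ :=
    hintBd.mono' hF₀meas.aestronglyMeasurable (Filter.Eventually.of_forall hF₀bd)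
  -- the comparison integral vanishes by cancellation of `h_{K'}`
  have hF₀intzero : ∫ t, F₀ t = 0 := by
    have hrw : ∀ t : E n × E n × E n, F₀ t =
        (fun x : E n => ((haar K' ηK x : ℝ) : ℂ)) t.1 *
          (fun p : E n × E n => K c p.1 p.2 * ((haar I ηI p.1 : ℝ) : ℂ) *
            ((haar J (fun _ => false) p.2 : ℝ) : ℂ)) t.2 := by
      intro t
      simp only [hF₀def]
      ring
    have hprod := MeasureTheory.integral_prod_mul (μ := (volume : Measure (E n)))
      (ν := (volume : Measure (E n × E n)))
      (f := fun x : E n => ((haar K' ηK x : ℝ) : ℂ))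
      (g := fun p : E n × E n => K c p.1 p.2 * ((haar I ηI p.1 : ℝ) : ℂ) *
        ((haar J (fun _ => false) p.2 : ℝ) : ℂ))
    have h0 : ∫ x : E n, ((haar K' ηK x : ℝ) : ℂ) = 0 := by
      have h0' : ∫ x : E n, ((haar K' ηK x : ℝ) : ℂ) =
          ((∫ x : E n, haar K' ηK x : ℝ) : ℂ) :=
        integral_ofReal (𝕜 := ℂ) (f := haar K' ηK)
      rw [h0', integral_haar_eq_zero K' ηK hηK, Complex.ofReal_zero]
    calc ∫ t, F₀ t
        = ∫ t : E n × E n × E n, (fun x : E n => ((haar K' ηK x : ℝ) : ℂ)) t.1 *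
            (fun p : E n × E n => K c p.1 p.2 * ((haar I ηI p.1 : ℝ) : ℂ) *
              ((haar J (fun _ => false) p.2 : ℝ) : ℂ)) t.2 :=
          integral_congr_ae (Filter.Eventually.of_forall hrw)
      _ = (∫ x : E n, ((haar K' ηK x : ℝ) : ℂ)) *
            (∫ p : E n × E n, K c p.1 p.2 * ((haar I ηI p.1 : ℝ) : ℂ) *
              ((haar J (fun _ => false) p.2 : ℝ) : ℂ)) := hprod
      _ = 0 := by rw [h0, zero_mul]
  have hsplitInt : ∫ t, F t = ∫ t, (F t - F₀ t) := by
    rw [integral_sub hFint hF₀int, hF₀intzero, sub_zero]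
  -- Hölder estimate for the kernel difference
  have hKdiff : ∀ x y z : E n, x ∈ K'.set → y ∈ I.clSet → z ∈ J.clSet →
      ‖K x y z - K c y z‖ ≤ 2 * CK * K'.side ^ α / D ^ β := by
    intro x y z hx hy hz
    have hx' : x ∈ K'.clSet := set_subset_clSet K' hx
    set w : E n := fun i => (x i + c i) / 2 with hw
    have hci : ∀ i, c i = K'.corner i + K'.side / 2 := fun i => by rw [hcdef]; rfl
    have hwcl : w ∈ K'.clSet := by
      intro i
      obtain ⟨h1, h2⟩ := hx i
      simp only [hw, hci i]
      constructor
      · have := hsK; linarith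
      · have := hsK; linarith
    have hq : (0:ℝ) ≤ K'.side / 4 := by linarith
    have hdxw : dist x w ≤ K'.side / 4 := by
      rw [dist_pi_le_iff hq]
      intro i
      rw [Real.dist_eq]
      obtain ⟨h1, h2⟩ := hx i
      simp only [hw, hci i]
      rw [abs_le]
      constructor <;> linarith
    have hdwc : dist w c ≤ K'.side / 4 := by
      rw [dist_pi_le_iff hq]
      intro i
      rw [Real.dist_eq]
      obtain ⟨h1, h2⟩ := hx i
      simp only [hw, hci i]
      rw [abs_le]
      constructor <;> linarith
    have hmax1 := hsep hx' hy hz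
    have hmax2 := hsep hwcl hy hz
    have hcond1 : dist x w ≤ max (dist x y) (dist x z) / 2 := by linarith
    have hcond2 : dist w c ≤ max (dist w y) (dist w z) / 2 := by linarith
    have h1 := hK.2.2.1 x w y z (hoff hx' hy hz) (hoff hwcl hy hz) hcond1
    have h2 := hK.2.2.1 w c y z (hoff hwcl hy hz) (hoff hccl hy hz) hcond2
    rw [← hβ] at h1 h2
    have hterm : ∀ d s : ℝ, d ≤ K'.side / 4 → 0 ≤ d → D ≤ s →
        CK * d ^ α / s ^ β ≤ CK * K'.side ^ α / D ^ β := by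
      intro d s hd hd0 hs
      have hnum : d ^ α ≤ K'.side ^ α :=
        Real.rpow_le_rpow hd0 (by linarith) hα0.le
      have hden : D ^ β ≤ s ^ β := Real.rpow_le_rpow hD0.le hs hβpos.le
      exact div_le_div₀ (mul_nonneg hCK (Real.rpow_nonneg hsK.le α))
        (mul_le_mul_of_nonneg_left hnum hCK) (Real.rpow_pos_of_pos hD0 β) hden
    have ht1 := h1.trans (hterm _ _ hdxw dist_nonneg (hsum hx' hy hz))
    have ht2 := h2.trans (hterm _ _ hdwc dist_nonneg (hsum hwcl hy hz))
    calc ‖K x y z - K c y z‖ ≤ ‖K x y z - K w y z‖ + ‖K w y z - K c y z‖ := by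
          have h := dist_triangle (K x y z) (K w y z) (K c y z)
          simpa [dist_eq_norm] using h
      _ ≤ CK * K'.side ^ α / D ^ β + CK * K'.side ^ α / D ^ β := add_le_add ht1 ht2
      _ = 2 * CK * K'.side ^ α / D ^ β := by ring
  -- bound for `F - F₀`
  have h2CKD : 0 ≤ 2 * CK * K'.side ^ α / D ^ β :=
    div_nonneg (mul_nonneg (mul_nonneg (by norm_num) hCK) (Real.rpow_nonneg hsK.le α))
      (Real.rpow_nonneg hD0.le β)
  set M₂ : ℝ := 2 * CK * K'.side ^ α / D ^ β * haarBd I * haarBd J * haarBd K' with hM₂def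
  have hF'bd : ∀ t, ‖F t - F₀ t‖ ≤ Bx.indicator (fun _ => M₂) t := by
    intro t
    by_cases ht : t ∈ Bx
    · rw [Set.indicator_of_mem ht, hM₂def]
      obtain ⟨x, y, z⟩ := t
      obtain ⟨hx, hy, hz⟩ := ht
      have heq : F (x, y, z) - F₀ (x, y, z) =
          (K x y z - K c y z) * ((haar I ηI y : ℝ) : ℂ) *
            ((haar J (fun _ => false) z : ℝ) : ℂ) * ((haar K' ηK x : ℝ) : ℂ) := by
        simp only [hFdef, hF₀def]
        ring
      rw [heq]
      exact norm_mul4_le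
        (hKdiff x y z hx (set_subset_clSet I hy) (set_subset_clSet J hz))
        (abs_haar_le I ηI y) (abs_haar_le J _ z) (abs_haar_le K' ηK x)
        h2CKD (haarBd_nonneg I) (haarBd_nonneg J)
    · rw [Set.indicator_of_notMem ht, hFzero t ht, hF₀zero t ht, sub_zero, norm_zero]
  have hintBd₂ : Integrable (Bx.indicator fun _ => M₂) := by
    rw [integrable_indicator_iff hBxm]
    exact integrableOn_const (by rw [hBxvol]; exact ENNReal.ofReal_ne_top)
  have hvolBox : (0:ℝ) ≤ K'.vol * (I.vol * J.vol) :=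
    mul_nonneg (vol_pos K').le (mul_nonneg (vol_pos I).le (vol_pos J).le)
  have key : ‖∫ t, F t‖ ≤ M₂ * (K'.vol * (I.vol * J.vol)) := by
    rw [hsplitInt]
    calc ‖∫ t, (F t - F₀ t)‖ ≤ ∫ t, Bx.indicator (fun _ => M₂) t :=
          norm_integral_le_of_norm_le hintBd₂ (Filter.Eventually.of_forall hF'bd)
      _ = M₂ * (K'.vol * (I.vol * J.vol)) := by
          rw [integral_indicator_const _ hBxm, measureReal_def, hBxvol, smul_eq_mul,
            ENNReal.toReal_ofReal hvolBox]
          ring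
  -- the arithmetic of exponents
  have hQv : Q.vol ^ 2 = Q.side ^ (2 * (n:ℝ)) := by
    rw [Cube.vol, ← pow_mul, ← Real.rpow_natCast Q.side (n * 2)]
    congr 1
    push_cast; ring
  have hDβpos : (0:ℝ) < D ^ β := Real.rpow_pos_of_pos hD0 β
  have hQvpos : (0:ℝ) < Q.vol ^ 2 := pow_pos (vol_pos Q) 2
  have hDβlow : c₀ ^ β * (K'.side ^ (α/2) * Q.side ^ (β - α/2)) ≤ D ^ β := by
    have e0 : c₀ ^ β * (K'.side ^ (α/2) * Q.side ^ (β - α/2)) =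
        (c₀ * (K'.side ^ γ * Q.side ^ (1 - γ))) ^ β := by
      rw [Real.mul_rpow hc₀.le
          (mul_nonneg (Real.rpow_nonneg hsK.le γ) (Real.rpow_nonneg hsQ.le _)),
        Real.mul_rpow (Real.rpow_nonneg hsK.le γ) (Real.rpow_nonneg hsQ.le _),
        ← Real.rpow_mul hsK.le, ← Real.rpow_mul hsQ.le, hγβ,
        show (1 - γ) * β = β - α/2 by rw [sub_mul, one_mul, hγβ]]
    rw [e0]
    exact Real.rpow_le_rpow
      (mul_nonneg hc₀.le
        (mul_nonneg (Real.rpow_nonneg hsK.le γ) (Real.rpow_nonneg hsQ.le _)))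
      hD2 hβpos.le
  have hkey : 2 * CK * K'.side ^ α / D ^ β ≤
      2 * (c₀ ^ β)⁻¹ * CK * ((K'.side / Q.side) ^ (α/2)) / Q.vol ^ 2 := by
    rw [div_le_div_iff₀ hDβpos hQvpos]
    have e1 : (K'.side / Q.side) ^ (α/2) = K'.side ^ (α/2) / Q.side ^ (α/2) :=
      Real.div_rpow hsK.le hsQ.le _
    have e2 : K'.side ^ (α/2) * K'.side ^ (α/2) = K'.side ^ α := by
      rw [← Real.rpow_add hsK]; norm_num
    have e3 : Q.side ^ (β - α/2) / Q.side ^ (α/2) = Q.side ^ (2*(n:ℝ)) := by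
      rw [← Real.rpow_sub hsQ]
      congr 1
      rw [hβ]; ring
    have hnn : 0 ≤ 2 * (c₀ ^ β)⁻¹ * CK * ((K'.side / Q.side) ^ (α/2)) :=
      mul_nonneg (mul_nonneg (mul_nonneg (by norm_num) (inv_pos.mpr hc₀β).le) hCK)
        (Real.rpow_nonneg (div_nonneg hsK.le hsQ.le) _)
    calc 2 * CK * K'.side ^ α * Q.vol ^ 2
        = 2 * (c₀ ^ β)⁻¹ * CK * ((K'.side / Q.side) ^ (α/2)) *
            (c₀ ^ β * (K'.side ^ (α/2) * Q.side ^ (β - α/2))) := by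
          rw [e1, hQv, ← e2, ← e3]
          have h4 : (c₀:ℝ) ^ β ≠ 0 := hc₀β.ne'
          have h5 : Q.side ^ (α/2) ≠ 0 := (Real.rpow_pos_of_pos hsQ _).ne'
          field_simp
      _ ≤ 2 * (c₀ ^ β)⁻¹ * CK * ((K'.side / Q.side) ^ (α/2)) * D ^ β :=
          mul_le_mul_of_nonneg_left hDβlow hnn
  -- conclusion
  calc ‖∫ t, F t‖ ≤ M₂ * (K'.vol * (I.vol * J.vol)) := key
    _ = (2 * CK * K'.side ^ α / D ^ β) * (haarBd I * I.vol) * (haarBd J * J.vol) *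
          (haarBd K' * K'.vol) := by rw [hM₂def]; ring
    _ = (2 * CK * K'.side ^ α / D ^ β) *
          (Real.sqrt I.vol * Real.sqrt J.vol * Real.sqrt K'.vol) := by
        rw [haarBd_mul_vol, haarBd_mul_vol, haarBd_mul_vol]; ring
    _ ≤ (2 * (c₀ ^ β)⁻¹ * CK * ((K'.side / Q.side) ^ (α/2)) / Q.vol ^ 2) *
          (Real.sqrt I.vol * Real.sqrt J.vol * Real.sqrt K'.vol) := by
        apply mul_le_mul_of_nonneg_right hkey
        positivity
    _ = 2 * (c₀ ^ β)⁻¹ * CK * (Real.sqrt (I.vol * J.vol * K'.vol) / Q.vol ^ 2) *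
          ((K'.side / Q.side) ^ (α / 2)) := by
        rw [Real.sqrt_mul (mul_nonneg (vol_pos I).le (vol_pos J).le),
          Real.sqrt_mul (vol_pos I).le]
        ring

end Bilinear
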